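/- The effective resistances on the nested fractal graphs are compatible under decimation: if (q, ρ) satisfies the renormalisation invariance E_0 = ρ Ẽ_0, then for all integers m ≥ n ≥ 0 and all x, y ∈ V_n one has R_m(x,y) = R_n(x,y), where for each k the form E_k(f) := ρ^k Σ_{w∈I^k} E_0((f∘ψ_w)|_{V_0}) is defined for f : V_k → ℝ and R_k(x,y) := (inf{E_k(f) : f : V_k → ℝ, f(x) = 1, f(y) = 0})^{-1} for x ≠ y in V_k, with R_k(x,x) := 0. -/

import Mathlib

open Finset Filter MeasureTheory
open scoped ENNReal RealInnerProductSpace BigOperators Classical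

noncomputable section

variable {d N : ℕ}

/-- The composition `ψ_{i₁} ∘ ⋯ ∘ ψ_{iₙ}` along a word `w = (i₁, …, iₙ)`. -/
def psiWord (ψ : Fin N → EuclideanSpace ℝ (Fin d) → EuclideanSpace ℝ (Fin d)) :
    List (Fin N) → EuclideanSpace ℝ (Fin d) → EuclideanSpace ℝ (Fin d)
  | [] => id
  | i :: w => ψ i ∘ psiWord ψ w

/-- The set of fixed points of the maps `ψ_i`. -/
def fixPts (ψ : Fin N → EuclideanSpace ℝ (Fin d) → EuclideanSpace ℝ (Fin d)) :
    Set (EuclideanSpace ℝ (Fin d)) :=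
  {x | ∃ i, ψ i x = x}

/-- The set `V_0` of essential fixed points: fixed points `x` such that `ψ_i(x) = ψ_j(y)` for
some `i ≠ j` and some fixed point `y`. -/
def essFixPts (ψ : Fin N → EuclideanSpace ℝ (Fin d) → EuclideanSpace ℝ (Fin d)) :
    Set (EuclideanSpace ℝ (Fin d)) :=
  {x | x ∈ fixPts ψ ∧ ∃ i j, i ≠ j ∧ ∃ y ∈ fixPts ψ, ψ i x = ψ j y}

/-- The vertex sets `V_n`: `V_0` is the set of essential fixed points and
`V_{n+1} = ⋃_i ψ_i(V_n)`. -/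
def Vseq (ψ : Fin N → EuclideanSpace ℝ (Fin d) → EuclideanSpace ℝ (Fin d)) :
    ℕ → Set (EuclideanSpace ℝ (Fin d))
  | 0 => essFixPts ψ
  | n + 1 => ⋃ i, ψ i '' Vseq ψ n

/-- An `n`-cell is a set of the form `ψ_w(V_0)` for a word `w` of length `n`. -/
def IsCell (ψ : Fin N → EuclideanSpace ℝ (Fin d) → EuclideanSpace ℝ (Fin d)) (n : ℕ)
    (C : Set (EuclideanSpace ℝ (Fin d))) : Prop :=
  ∃ w : List (Fin N), w.length = n ∧ C = psiWord ψ w '' essFixPts ψ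

/-- The signed distance-like quantity determining on which side of the hyperplane `H_{xy}`
perpendicularly bisecting `x` and `y` a point `z` lies (`z ∈ H_{xy}` iff it vanishes). -/
def sideVal (x y z : EuclideanSpace ℝ (Fin d)) : ℝ :=
  ⟪z - midpoint ℝ x y, y - x⟫

/-- Reflection `U_{xy}` in the hyperplane perpendicularly bisecting `x` and `y`. -/
def reflectPB (x y z : EuclideanSpace ℝ (Fin d)) : EuclideanSpace ℝ (Fin d) :=
  z - ((2 * sideVal x y z) / ⟪y - x, y - x⟫) • (y - x)

/-- The axioms of a nested fractal (Lindstrøm): `(ψ_i)` is a family of contracting similitudes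
with ratio `β⁻¹`, `F` is the associated attractor, `|V_0| ≥ 2`, and the open set condition,
connectivity, symmetry and nesting axioms hold. -/
structure IsNestedFractal (β : ℝ)
    (ψ : Fin N → EuclideanSpace ℝ (Fin d) → EuclideanSpace ℝ (Fin d))
    (F : Set (EuclideanSpace ℝ (Fin d))) : Prop where
  beta_gt_one : 1 < β
  similitude : ∀ i, ∃ U : EuclideanSpace ℝ (Fin d) ≃ₗᵢ[ℝ] EuclideanSpace ℝ (Fin d),
    ∃ γ : EuclideanSpace ℝ (Fin d), ∀ x, ψ i x = β⁻¹ • U x + γ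
  F_nonempty : F.Nonempty
  F_compact : IsCompact F
  F_invariant : F = ⋃ i, ψ i '' F
  v0_nontrivial : (essFixPts ψ).Nontrivial
  open_set_condition : ∃ W : Set (EuclideanSpace ℝ (Fin d)), W.Nonempty ∧ IsOpen W ∧
    Bornology.IsBounded W ∧ (Pairwise fun i j => Disjoint (ψ i '' W) (ψ j '' W)) ∧
    (⋃ i, ψ i '' W) ⊆ W
  connectivity : ∀ i i' : Fin N, ∃ (n : ℕ) (seq : ℕ → Fin N), seq 0 = i ∧ seq n = i' ∧
    ∀ k < n, ((ψ (seq k) '' essFixPts ψ) ∩ (ψ (seq (k + 1)) '' essFixPts ψ)).Nonempty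
  symmetry : ∀ x ∈ essFixPts ψ, ∀ y ∈ essFixPts ψ, x ≠ y →
    ∀ (n : ℕ) (C : Set (EuclideanSpace ℝ (Fin d))), IsCell ψ n C →
      IsCell ψ n (reflectPB x y '' C) ∧
        ((∃ a ∈ C, 0 < sideVal x y a) → (∃ b ∈ C, sideVal x y b < 0) →
          reflectPB x y '' C = C)
  nesting : ∀ n : ℕ, 1 ≤ n → ∀ w w' : List (Fin N), w.length = n → w'.length = n → w ≠ w' →
    (psiWord ψ w '' F) ∩ (psiWord ψ w' '' F) =
      (psiWord ψ w '' essFixPts ψ) ∩ (psiWord ψ w' '' essFixPts ψ)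

/-- The quadratic form `E_0(f) = (1/2) Σ_{x,y ∈ V_0} q_{x,y} (f(x) - f(y))²` on functions,
where `V0` is a finite vertex set. -/
def en0 (V0 : Finset (EuclideanSpace ℝ (Fin d)))
    (q : EuclideanSpace ℝ (Fin d) → EuclideanSpace ℝ (Fin d) → ℝ)
    (f : EuclideanSpace ℝ (Fin d) → ℝ) : ℝ :=
  (1 / 2) * ∑ x ∈ V0, ∑ y ∈ V0, q x y * (f x - f y) ^ 2

/-- The renormalised form `Ẽ_0(f) = inf { Σ_{i∈I} E_0(g ∘ ψ_i) : g|_{V_0} = f }` (functions on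
`V_1` are represented by functions on `ℝ^d`; `E_0` only depends on values on `V_0`). -/
def en0tilde (ψ : Fin N → EuclideanSpace ℝ (Fin d) → EuclideanSpace ℝ (Fin d))
    (V0 : Finset (EuclideanSpace ℝ (Fin d)))
    (q : EuclideanSpace ℝ (Fin d) → EuclideanSpace ℝ (Fin d) → ℝ)
    (f : EuclideanSpace ℝ (Fin d) → ℝ) : ℝ :=
  sInf {t | ∃ g : EuclideanSpace ℝ (Fin d) → ℝ,
    (∀ x ∈ V0, g x = f x) ∧ t = ∑ i : Fin N, en0 V0 q (g ∘ ψ i)}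

/-- The level-`n` energy `E_n(f) := ρ^n Σ_{w ∈ Iⁿ} E_0(f ∘ ψ_w)`. -/
def enLevel (ψ : Fin N → EuclideanSpace ℝ (Fin d) → EuclideanSpace ℝ (Fin d))
    (V0 : Finset (EuclideanSpace ℝ (Fin d)))
    (q : EuclideanSpace ℝ (Fin d) → EuclideanSpace ℝ (Fin d) → ℝ) (ρ : ℝ) (n : ℕ)
    (f : EuclideanSpace ℝ (Fin d) → ℝ) : ℝ :=
  ρ ^ n * ∑ w : Fin n → Fin N, en0 V0 q (f ∘ psiWord ψ (List.ofFn w))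

/-- The level-`n` effective resistance
`R_n(x,y) := (inf {E_n(f) : f(x) = 1, f(y) = 0})⁻¹` for `x ≠ y`, with `R_n(x,x) := 0`. -/
def resLevel (ψ : Fin N → EuclideanSpace ℝ (Fin d) → EuclideanSpace ℝ (Fin d))
    (V0 : Finset (EuclideanSpace ℝ (Fin d)))
    (q : EuclideanSpace ℝ (Fin d) → EuclideanSpace ℝ (Fin d) → ℝ) (ρ : ℝ) (n : ℕ)
    (x y : EuclideanSpace ℝ (Fin d)) : ℝ :=
  if x = y then 0
  else (sInf {t | ∃ f : EuclideanSpace ℝ (Fin d) → ℝ,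
    f x = 1 ∧ f y = 0 ∧ t = enLevel ψ V0 q ρ n f})⁻¹

end


noncomputable section AuxDecim
open Finset

variable {d N : ℕ} {β : ℝ} {ψ : Fin N → EuclideanSpace ℝ (Fin d) → EuclideanSpace ℝ (Fin d)}
  {F : Set (EuclideanSpace ℝ (Fin d))}

lemma psiWord_append (u v : List (Fin N)) :
    psiWord ψ (u ++ v) = psiWord ψ u ∘ psiWord ψ v := by
  induction u with
  | nil => rfl
  | cons i u ih => simp [psiWord, ih, Function.comp_assoc]

lemma ofFn_snoc' {m : ℕ} (w : Fin m → Fin N) (i : Fin N) :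
    List.ofFn (Fin.snoc w i : Fin (m + 1) → Fin N) = List.ofFn w ++ [i] := by
  rw [List.ofFn_succ']
  simp [List.concat_eq_append]

lemma ofFn_cons' {n : ℕ} (i : Fin N) (w : Fin n → Fin N) :
    List.ofFn (Fin.cons i w : Fin (n + 1) → Fin N) = i :: List.ofFn w := by
  simp [List.ofFn_succ]

lemma psi_dist (hnf : IsNestedFractal β ψ F) (i : Fin N)
    (a b : EuclideanSpace ℝ (Fin d)) : dist (ψ i a) (ψ i b) = β⁻¹ * dist a b := by
  obtain ⟨U, γ, hU⟩ := hnf.similitude i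
  have hβ : (0 : ℝ) < β := lt_trans one_pos hnf.beta_gt_one
  rw [hU, hU, dist_eq_norm]
  have : β⁻¹ • U a + γ - (β⁻¹ • U b + γ) = β⁻¹ • (U a - U b) := by
    rw [smul_sub]; abel
  rw [this, norm_smul, ← map_sub U, U.norm_map, Real.norm_eq_abs,
    abs_of_pos (inv_pos.2 hβ), dist_eq_norm]

lemma psi_injective (hnf : IsNestedFractal β ψ F) (i : Fin N) :
    Function.Injective (ψ i) := by
  intro a b hab
  have h := psi_dist hnf i a b
  rw [hab, dist_self] at h
  have hβ : (0 : ℝ) < β⁻¹ := inv_pos.2 (lt_trans one_pos hnf.beta_gt_one)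
  have : dist a b = 0 := by
    rcases mul_eq_zero.1 h.symm with h' | h'
    · exact absurd h' (ne_of_gt hβ)
    · exact h'
  exact dist_eq_zero.1 this

lemma psiWord_injective (hnf : IsNestedFractal β ψ F) (w : List (Fin N)) :
    Function.Injective (psiWord ψ w) := by
  induction w with
  | nil => exact fun a b h => h
  | cons i w ih => exact fun a b h => ih (psi_injective hnf i h)

lemma fixPts_subset_F (hnf : IsNestedFractal β ψ F) : fixPts ψ ⊆ F := by
  intro x hx
  obtain ⟨i, hix⟩ := hx
  obtain ⟨z, hz⟩ := hnf.F_nonempty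
  have hβ : (0 : ℝ) < β := lt_trans one_pos hnf.beta_gt_one
  have hmaps : ∀ y, y ∈ F → ψ i y ∈ F := by
    intro y hy
    have : ψ i y ∈ ⋃ j, ψ j '' F := Set.mem_iUnion.2 ⟨i, ⟨y, hy, rfl⟩⟩
    rwa [← hnf.F_invariant] at this
  have hseq : ∀ n, (ψ i)^[n] z ∈ F ∧ dist ((ψ i)^[n] z) x ≤ β⁻¹ ^ n * dist z x := by
    intro n
    induction n with
    | zero => simpa using hz
    | succ n ih =>
      rw [Function.iterate_succ_apply']
      refine ⟨hmaps _ ih.1, ?_⟩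
      calc dist (ψ i ((ψ i)^[n] z)) x = β⁻¹ * dist ((ψ i)^[n] z) x := by
            conv_lhs => rw [← hix]
            exact psi_dist hnf i _ _
        _ ≤ β⁻¹ * (β⁻¹ ^ n * dist z x) :=
            mul_le_mul_of_nonneg_left ih.2 (le_of_lt (inv_pos.2 hβ))
        _ = β⁻¹ ^ (n + 1) * dist z x := by ring
  have hlim : Filter.Tendsto (fun n => (ψ i)^[n] z) Filter.atTop (nhds x) := by
    rw [tendsto_iff_dist_tendsto_zero]
    apply squeeze_zero (fun n => dist_nonneg) (fun n => (hseq n).2)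
    have h1 : Filter.Tendsto (fun n : ℕ => β⁻¹ ^ n) Filter.atTop (nhds 0) :=
      tendsto_pow_atTop_nhds_zero_of_lt_one (le_of_lt (inv_pos.2 hβ))
        (inv_lt_one_of_one_lt₀ hnf.beta_gt_one)
    simpa using h1.mul_const (dist z x)
  exact hnf.F_compact.isClosed.mem_of_tendsto hlim
    (Filter.Eventually.of_forall fun n => (hseq n).1)

lemma Vseq_subset_F (hnf : IsNestedFractal β ψ F) : ∀ n, Vseq ψ n ⊆ F := by
  intro n
  induction n with
  | zero => exact fun x hx => fixPts_subset_F hnf hx.1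
  | succ n ih =>
    intro x hx
    obtain ⟨i, y, hy, rfl⟩ := Set.mem_iUnion.1 hx
    have : ψ i y ∈ ⋃ j, ψ j '' F := Set.mem_iUnion.2 ⟨i, ⟨y, ih hy, rfl⟩⟩
    rwa [← hnf.F_invariant] at this

lemma Vseq_subset_succ : ∀ n, Vseq ψ n ⊆ Vseq ψ (n + 1) := by
  intro n
  induction n with
  | zero =>
    intro x hx
    obtain ⟨i, hix⟩ := hx.1
    exact Set.mem_iUnion.2 ⟨i, ⟨x, hx, hix⟩⟩
  | succ n ih =>
    exact Set.iUnion_mono fun i => Set.image_mono ih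

lemma Vseq_mono {n m : ℕ} (h : n ≤ m) : Vseq ψ n ⊆ Vseq ψ m := by
  induction m with
  | zero => rw [Nat.le_zero.1 h]
  | succ m ih =>
    rcases Nat.eq_or_lt_of_le h with he | hlt
    · rw [he]
    · exact (ih (Nat.lt_succ_iff.1 hlt)).trans (Vseq_subset_succ m)

lemma Vseq_rep {n : ℕ} {x : EuclideanSpace ℝ (Fin d)} (hx : x ∈ Vseq ψ n) :
    ∃ w : Fin n → Fin N, ∃ v ∈ essFixPts ψ, psiWord ψ (List.ofFn w) v = x := by
  induction n generalizing x with
  | zero => exact ⟨fun i => i.elim0, x, hx, rfl⟩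
  | succ n ih =>
    obtain ⟨i, x', hx', rfl⟩ := Set.mem_iUnion.1 hx
    obtain ⟨w, v, hv, hw⟩ := ih hx'
    refine ⟨Fin.cons i w, v, hv, ?_⟩
    rw [ofFn_cons']
    simp [psiWord, hw]

variable {V0 : Finset (EuclideanSpace ℝ (Fin d))}
  {q : EuclideanSpace ℝ (Fin d) → EuclideanSpace ℝ (Fin d) → ℝ} {ρ : ℝ}

lemma en0_congr {f g : EuclideanSpace ℝ (Fin d) → ℝ} (h : ∀ x ∈ V0, f x = g x) :
    en0 V0 q f = en0 V0 q g := by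
  unfold en0
  congr 1
  refine Finset.sum_congr rfl fun x hx => Finset.sum_congr rfl fun y hy => ?_
  rw [h x hx, h y hy]

lemma q_nonneg (hqdiag : ∀ x ∈ V0, q x x = 0)
    (hqsympos : ∀ x ∈ V0, ∀ y ∈ V0, x ≠ y → q x y = q y x ∧ 0 < q x y)
    {x y : EuclideanSpace ℝ (Fin d)} (hx : x ∈ V0) (hy : y ∈ V0) : 0 ≤ q x y := by
  by_cases hxy : x = y
  · subst hxy; rw [hqdiag x hx]
  · exact le_of_lt (hqsympos x hx y hy hxy).2

lemma en0_nonneg (hqdiag : ∀ x ∈ V0, q x x = 0)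
    (hqsympos : ∀ x ∈ V0, ∀ y ∈ V0, x ≠ y → q x y = q y x ∧ 0 < q x y)
    (f : EuclideanSpace ℝ (Fin d) → ℝ) : 0 ≤ en0 V0 q f := by
  unfold en0
  apply mul_nonneg (by norm_num)
  refine Finset.sum_nonneg fun x hx => Finset.sum_nonneg fun y hy =>
    mul_nonneg (q_nonneg hqdiag hqsympos hx hy) (sq_nonneg _)

lemma en0tildeSet_nonempty (f : EuclideanSpace ℝ (Fin d) → ℝ) :
    {t | ∃ g : EuclideanSpace ℝ (Fin d) → ℝ,
      (∀ x ∈ V0, g x = f x) ∧ t = ∑ i : Fin N, en0 V0 q (g ∘ ψ i)}.Nonempty :=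
  ⟨_, f, fun _ _ => rfl, rfl⟩

lemma en0tildeSet_bddBelow (hqdiag : ∀ x ∈ V0, q x x = 0)
    (hqsympos : ∀ x ∈ V0, ∀ y ∈ V0, x ≠ y → q x y = q y x ∧ 0 < q x y)
    (f : EuclideanSpace ℝ (Fin d) → ℝ) :
    BddBelow {t | ∃ g : EuclideanSpace ℝ (Fin d) → ℝ,
      (∀ x ∈ V0, g x = f x) ∧ t = ∑ i : Fin N, en0 V0 q (g ∘ ψ i)} := by
  refine ⟨0, fun t ht => ?_⟩
  obtain ⟨g, _, rfl⟩ := ht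
  exact Finset.sum_nonneg fun i _ => en0_nonneg hqdiag hqsympos _

lemma en0tilde_le (hqdiag : ∀ x ∈ V0, q x x = 0)
    (hqsympos : ∀ x ∈ V0, ∀ y ∈ V0, x ≠ y → q x y = q y x ∧ 0 < q x y)
    (f : EuclideanSpace ℝ (Fin d) → ℝ) :
    en0tilde ψ V0 q f ≤ ∑ i : Fin N, en0 V0 q (f ∘ ψ i) :=
  csInf_le (en0tildeSet_bddBelow hqdiag hqsympos f) ⟨f, fun _ _ => rfl, rfl⟩

lemma en0tilde_approx (f : EuclideanSpace ℝ (Fin d) → ℝ) {ε : ℝ} (hε : 0 < ε) :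
    ∃ g : EuclideanSpace ℝ (Fin d) → ℝ, (∀ x ∈ V0, g x = f x) ∧
      ∑ i : Fin N, en0 V0 q (g ∘ ψ i) < en0tilde ψ V0 q f + ε := by
  have h := exists_lt_of_csInf_lt (en0tildeSet_nonempty (ψ := ψ) (q := q) f)
    (lt_add_of_pos_right (en0tilde ψ V0 q f) hε)
  obtain ⟨t, ⟨g, hg, rfl⟩, ht⟩ := h
  exact ⟨g, hg, ht⟩

lemma enLevel_nonneg (hρ : 0 < ρ) (hqdiag : ∀ x ∈ V0, q x x = 0)
    (hqsympos : ∀ x ∈ V0, ∀ y ∈ V0, x ≠ y → q x y = q y x ∧ 0 < q x y)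
    (n : ℕ) (f : EuclideanSpace ℝ (Fin d) → ℝ) : 0 ≤ enLevel ψ V0 q ρ n f :=
  mul_nonneg (pow_nonneg hρ.le n)
    (Finset.sum_nonneg fun w _ => en0_nonneg hqdiag hqsympos _)

lemma enLevel_succ (m : ℕ) (f : EuclideanSpace ℝ (Fin d) → ℝ) :
    enLevel ψ V0 q ρ (m + 1) f = ρ ^ (m + 1) *
      ∑ w : Fin m → Fin N, ∑ i : Fin N,
        en0 V0 q ((f ∘ psiWord ψ (List.ofFn w)) ∘ ψ i) := by
  unfold enLevel
  congr 1
  rw [← Equiv.sum_comp (Fin.snocEquiv (fun _ : Fin (m + 1) => Fin N))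
    (fun w' => en0 V0 q (f ∘ psiWord ψ (List.ofFn w'))), Fintype.sum_prod_type,
    Finset.sum_comm]
  refine Finset.sum_congr rfl fun w _ => Finset.sum_congr rfl fun i _ => ?_
  have h1 : (Fin.snocEquiv (fun _ : Fin (m + 1) => Fin N)) (i, w) = Fin.snoc w i := by
    funext j; rfl
  rw [h1, ofFn_snoc', psiWord_append]
  rfl

lemma enLevel_le_succ (hρ : 0 < ρ) (hqdiag : ∀ x ∈ V0, q x x = 0)
    (hqsympos : ∀ x ∈ V0, ∀ y ∈ V0, x ≠ y → q x y = q y x ∧ 0 < q x y)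
    (hqinv : ∀ f : EuclideanSpace ℝ (Fin d) → ℝ, en0 V0 q f = ρ * en0tilde ψ V0 q f)
    (m : ℕ) (f : EuclideanSpace ℝ (Fin d) → ℝ) :
    enLevel ψ V0 q ρ m f ≤ enLevel ψ V0 q ρ (m + 1) f := by
  rw [enLevel_succ]
  unfold enLevel
  calc ρ ^ m * ∑ w : Fin m → Fin N, en0 V0 q (f ∘ psiWord ψ (List.ofFn w))
      = ρ ^ (m + 1) * ∑ w : Fin m → Fin N, en0tilde ψ V0 q (f ∘ psiWord ψ (List.ofFn w)) := by
        rw [show ∀ s : (Fin m → Fin N) → ℝ, (∑ w, s w) = ∑ w, s w from fun _ => rfl]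
        rw [Finset.sum_congr rfl fun w _ => hqinv (f ∘ psiWord ψ (List.ofFn w)), ← Finset.mul_sum]
        ring
    _ ≤ ρ ^ (m + 1) * ∑ w : Fin m → Fin N, ∑ i : Fin N,
          en0 V0 q ((f ∘ psiWord ψ (List.ofFn w)) ∘ ψ i) := by
        refine mul_le_mul_of_nonneg_left
          (Finset.sum_le_sum fun w _ => en0tilde_le hqdiag hqsympos _) (pow_nonneg hρ.le _)

lemma essFixPts_mem_V1 {v : EuclideanSpace ℝ (Fin d)} (hv : v ∈ essFixPts ψ) :
    v ∈ Vseq ψ 1 := by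
  obtain ⟨i, hiv⟩ := hv.1
  simp only [Vseq]
  exact Set.mem_iUnion.2 ⟨i, v, hv, hiv⟩

lemma sInf_step (hnf : IsNestedFractal β ψ F)
    (hV0 : (V0 : Set (EuclideanSpace ℝ (Fin d))) = essFixPts ψ)
    (hρ : 0 < ρ)
    (hqdiag : ∀ x ∈ V0, q x x = 0)
    (hqsympos : ∀ x ∈ V0, ∀ y ∈ V0, x ≠ y → q x y = q y x ∧ 0 < q x y)
    (hqinv : ∀ f : EuclideanSpace ℝ (Fin d) → ℝ, en0 V0 q f = ρ * en0tilde ψ V0 q f)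
    (m : ℕ) {x y : EuclideanSpace ℝ (Fin d)}
    (hx : x ∈ Vseq ψ m) (hy : y ∈ Vseq ψ m) (hxy : x ≠ y) :
    sInf {t | ∃ f : EuclideanSpace ℝ (Fin d) → ℝ,
        f x = 1 ∧ f y = 0 ∧ t = enLevel ψ V0 q ρ (m + 1) f} =
      sInf {t | ∃ f : EuclideanSpace ℝ (Fin d) → ℝ,
        f x = 1 ∧ f y = 0 ∧ t = enLevel ψ V0 q ρ m f} := by
  have hAne : ∀ k : ℕ, {t | ∃ f : EuclideanSpace ℝ (Fin d) → ℝ,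
      f x = 1 ∧ f y = 0 ∧ t = enLevel ψ V0 q ρ k f}.Nonempty := fun k =>
    ⟨_, fun z => if z = x then 1 else 0, if_pos rfl, if_neg (Ne.symm hxy), rfl⟩
  have hAbdd : ∀ k : ℕ, BddBelow {t | ∃ f : EuclideanSpace ℝ (Fin d) → ℝ,
      f x = 1 ∧ f y = 0 ∧ t = enLevel ψ V0 q ρ k f} := by
    intro k
    refine ⟨0, fun t ht => ?_⟩
    obtain ⟨f, _, _, rfl⟩ := ht
    exact enLevel_nonneg hρ hqdiag hqsympos k f
  apply le_antisymm
  · -- `sInf A (m+1) ≤ sInf A m`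
    refine le_of_forall_pos_le_add fun ε hε => ?_
    obtain ⟨t, ⟨f, hfx, hfy, rfl⟩, hflt⟩ := exists_lt_of_csInf_lt (hAne m)
      (lt_add_of_pos_right (sInf _) (half_pos hε))
    have hcpos : (0 : ℝ) < ρ ^ (m + 1) * (Fintype.card (Fin m → Fin N) : ℝ) + 1 := by
      positivity
    set c : ℝ := ρ ^ (m + 1) * (Fintype.card (Fin m → Fin N) : ℝ) + 1 with hc
    have hε' : 0 < ε / 2 / c := div_pos (half_pos hε) hcpos
    have hgw : ∀ w : Fin m → Fin N, ∃ gw : EuclideanSpace ℝ (Fin d) → ℝ,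
        (∀ v ∈ V0, gw v = (f ∘ psiWord ψ (List.ofFn w)) v) ∧
        ∑ i : Fin N, en0 V0 q (gw ∘ ψ i) <
          en0tilde ψ V0 q (f ∘ psiWord ψ (List.ofFn w)) + ε / 2 / c :=
      fun w => en0tilde_approx (f ∘ psiWord ψ (List.ofFn w)) hε'
    choose G hG1 hG2 using hgw
    -- consistency of the pieces
    have hcons : ∀ (w w' : Fin m → Fin N) (v v' : EuclideanSpace ℝ (Fin d)),
        v ∈ Vseq ψ 1 → v' ∈ Vseq ψ 1 →
        psiWord ψ (List.ofFn w) v = psiWord ψ (List.ofFn w') v' → G w v = G w' v' := by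
      intro w w' v v' hv hv' heq
      by_cases hww : w = w'
      · subst hww
        rw [psiWord_injective hnf _ heq]
      · have hm : 1 ≤ m := by
          rcases Nat.eq_zero_or_pos m with h0 | h
          · subst h0; exact absurd (funext fun i => i.elim0) hww
          · exact h
        have hnest := hnf.nesting m hm (List.ofFn w) (List.ofFn w')
          (by simp) (by simp) (fun h => hww (List.ofFn_injective h))
        have hzmem : psiWord ψ (List.ofFn w) v ∈
            (psiWord ψ (List.ofFn w) '' essFixPts ψ) ∩
              (psiWord ψ (List.ofFn w') '' essFixPts ψ) := by
          rw [← hnest]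
          exact ⟨⟨v, Vseq_subset_F hnf 1 hv, rfl⟩, ⟨v', Vseq_subset_F hnf 1 hv', heq.symm⟩⟩
        obtain ⟨⟨u, hu, huz⟩, ⟨u', hu', huz'⟩⟩ := hzmem
        have hveq : u = v := psiWord_injective hnf (List.ofFn w) huz
        have hveq' : u' = v' := psiWord_injective hnf (List.ofFn w') (huz'.trans heq)
        have hv0 : v ∈ V0 := by
          rw [← Finset.mem_coe, hV0, ← hveq]; exact hu
        have hv0' : v' ∈ V0 := by
          rw [← Finset.mem_coe, hV0, ← hveq']; exact hu'
        rw [hG1 w v hv0, hG1 w' v' hv0']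
        simp only [Function.comp_apply]
        rw [heq]
    -- glue the pieces into a global function
    obtain ⟨g, hg⟩ : ∃ g : EuclideanSpace ℝ (Fin d) → ℝ,
        ∀ (w : Fin m → Fin N) (v : EuclideanSpace ℝ (Fin d)), v ∈ Vseq ψ 1 →
          g (psiWord ψ (List.ofFn w) v) = G w v := by
      classical
      refine ⟨fun z => if h : ∃ p : (Fin m → Fin N) × EuclideanSpace ℝ (Fin d),
          p.2 ∈ Vseq ψ 1 ∧ psiWord ψ (List.ofFn p.1) p.2 = z
        then G h.choose.1 h.choose.2 else f z, ?_⟩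
      intro w v hv
      have hP : ∃ p : (Fin m → Fin N) × EuclideanSpace ℝ (Fin d),
          p.2 ∈ Vseq ψ 1 ∧ psiWord ψ (List.ofFn p.1) p.2 = psiWord ψ (List.ofFn w) v :=
        ⟨(w, v), hv, rfl⟩
      simp only [dif_pos hP]
      exact hcons _ _ _ _ hP.choose_spec.1 hv hP.choose_spec.2
    have hgf : ∀ z, z ∈ Vseq ψ m → g z = f z := by
      intro z hz
      obtain ⟨w, v, hv, rfl⟩ := Vseq_rep hz
      have hv0 : v ∈ V0 := by rw [← Finset.mem_coe, hV0]; exact hv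
      rw [hg w v (essFixPts_mem_V1 hv)]
      exact hG1 w v hv0
    have hgx : g x = 1 := by rw [hgf x hx, hfx]
    have hgy : g y = 0 := by rw [hgf y hy, hfy]
    have hterm : ∀ w : Fin m → Fin N,
        ∑ i : Fin N, en0 V0 q ((g ∘ psiWord ψ (List.ofFn w)) ∘ ψ i)
          = ∑ i : Fin N, en0 V0 q (G w ∘ ψ i) := by
      intro w
      refine Finset.sum_congr rfl fun i _ => en0_congr fun v hv => ?_
      have hve : v ∈ essFixPts ψ := by rw [← hV0]; exact Finset.mem_coe.2 hv
      have hv1 : ψ i v ∈ Vseq ψ 1 := by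
        simp only [Vseq]
        exact Set.mem_iUnion.2 ⟨i, v, hve, rfl⟩
      exact hg w (ψ i v) hv1
    have henf : enLevel ψ V0 q ρ m f =
        ρ ^ (m + 1) * ∑ w : Fin m → Fin N,
          en0tilde ψ V0 q (f ∘ psiWord ψ (List.ofFn w)) := by
      unfold enLevel
      rw [Finset.sum_congr rfl fun w _ => hqinv (f ∘ psiWord ψ (List.ofFn w)), ← Finset.mul_sum]
      ring
    have hbound : enLevel ψ V0 q ρ (m + 1) g ≤ enLevel ψ V0 q ρ m f + ε / 2 := by
      rw [enLevel_succ]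
      calc ρ ^ (m + 1) * ∑ w : Fin m → Fin N, ∑ i : Fin N,
              en0 V0 q ((g ∘ psiWord ψ (List.ofFn w)) ∘ ψ i)
          = ρ ^ (m + 1) * ∑ w : Fin m → Fin N, ∑ i : Fin N, en0 V0 q (G w ∘ ψ i) := by
            rw [Finset.sum_congr rfl fun w _ => hterm w]
        _ ≤ ρ ^ (m + 1) * ∑ w : Fin m → Fin N,
              (en0tilde ψ V0 q (f ∘ psiWord ψ (List.ofFn w)) + ε / 2 / c) :=
            mul_le_mul_of_nonneg_left
              (Finset.sum_le_sum fun w _ => le_of_lt (hG2 w)) (pow_nonneg hρ.le _)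
        _ = ρ ^ (m + 1) * ∑ w : Fin m → Fin N,
              en0tilde ψ V0 q (f ∘ psiWord ψ (List.ofFn w))
            + ρ ^ (m + 1) * (Fintype.card (Fin m → Fin N) : ℝ) * (ε / 2 / c) := by
            rw [Finset.sum_add_distrib, Finset.sum_const, Finset.card_univ, nsmul_eq_mul]
            ring
        _ ≤ enLevel ψ V0 q ρ m f + ε / 2 := by
            rw [henf]
            have hle : ρ ^ (m + 1) * (Fintype.card (Fin m → Fin N) : ℝ) ≤ c := by
              rw [hc]; linarith
            have h2 : ρ ^ (m + 1) * (Fintype.card (Fin m → Fin N) : ℝ) * (ε / 2 / c)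
                ≤ ε / 2 := by
              calc ρ ^ (m + 1) * (Fintype.card (Fin m → Fin N) : ℝ) * (ε / 2 / c)
                  ≤ c * (ε / 2 / c) := mul_le_mul_of_nonneg_right hle (le_of_lt hε')
                _ = ε / 2 := by
                    rw [mul_comm]
                    exact div_mul_cancel₀ _ (ne_of_gt hcpos)
            linarith
    calc sInf {t | ∃ f : EuclideanSpace ℝ (Fin d) → ℝ,
            f x = 1 ∧ f y = 0 ∧ t = enLevel ψ V0 q ρ (m + 1) f}
        ≤ enLevel ψ V0 q ρ (m + 1) g := csInf_le (hAbdd (m + 1)) ⟨g, hgx, hgy, rfl⟩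
      _ ≤ enLevel ψ V0 q ρ m f + ε / 2 := hbound
      _ ≤ sInf {t | ∃ f : EuclideanSpace ℝ (Fin d) → ℝ,
            f x = 1 ∧ f y = 0 ∧ t = enLevel ψ V0 q ρ m f} + ε := by linarith
  · refine le_csInf (hAne (m + 1)) ?_
    rintro t ⟨g, hgx, hgy, rfl⟩
    exact le_trans (csInf_le (hAbdd m) ⟨g, hgx, hgy, rfl⟩)
      (enLevel_le_succ hρ hqdiag hqsympos hqinv m g)

end AuxDecim

noncomputable section

/-- compatibility of effective resistances under decimation: if `(q, ρ)` satisfies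
the renormalisation invariance `E_0 = ρ Ẽ_0`, then for all `m ≥ n ≥ 0` and all `x, y ∈ V_n` one
has `R_m(x,y) = R_n(x,y)`, where `R_k` is the effective resistance associated with the level-`k`
energy `E_k(f) = ρ^k Σ_{w ∈ Iᵏ} E_0(f ∘ ψ_w)`. -/
theorem resistance_decimation_compatibility
    {d N : ℕ} (β : ℝ)
    (ψ : Fin N → EuclideanSpace ℝ (Fin d) → EuclideanSpace ℝ (Fin d))
    (F : Set (EuclideanSpace ℝ (Fin d)))
    (hnf : IsNestedFractal β ψ F)
    (V0 : Finset (EuclideanSpace ℝ (Fin d)))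
    (hV0 : (V0 : Set (EuclideanSpace ℝ (Fin d))) = essFixPts ψ)
    (ρ : ℝ) (hρ : 1 < ρ)
    (q : EuclideanSpace ℝ (Fin d) → EuclideanSpace ℝ (Fin d) → ℝ)
    (hqdiag : ∀ x ∈ V0, q x x = 0)
    (hqrow : ∀ x ∈ V0, ∑ y ∈ V0, q x y = 1)
    (hqsympos : ∀ x ∈ V0, ∀ y ∈ V0, x ≠ y → q x y = q y x ∧ 0 < q x y)
    (hqinv : ∀ f : EuclideanSpace ℝ (Fin d) → ℝ, en0 V0 q f = ρ * en0tilde ψ V0 q f) :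
    ∀ m n : ℕ, n ≤ m → ∀ x ∈ Vseq ψ n, ∀ y ∈ Vseq ψ n,
      resLevel ψ V0 q ρ m x y = resLevel ψ V0 q ρ n x y := by
  have hρ0 : (0 : ℝ) < ρ := lt_trans one_pos hρ
  intro m n hnm x hx y hy
  by_cases hxy : x = y
  · subst hxy; simp [resLevel]
  · have key : ∀ m : ℕ, n ≤ m →
        sInf {t | ∃ f : EuclideanSpace ℝ (Fin d) → ℝ,
            f x = 1 ∧ f y = 0 ∧ t = enLevel ψ V0 q ρ m f} =
          sInf {t | ∃ f : EuclideanSpace ℝ (Fin d) → ℝ,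
            f x = 1 ∧ f y = 0 ∧ t = enLevel ψ V0 q ρ n f} := by
      intro m
      induction m with
      | zero => intro h; rw [Nat.le_zero.1 h]
      | succ m ih =>
        intro h
        rcases Nat.eq_or_lt_of_le h with he | hlt
        · rw [he]
        · have hnm' : n ≤ m := Nat.lt_succ_iff.1 hlt
          rw [sInf_step hnf hV0 hρ0 hqdiag hqsympos hqinv m
            (Vseq_mono hnm' hx) (Vseq_mono hnm' hy) hxy, ih hnm']
    unfold resLevel
    rw [if_neg hxy, if_neg hxy, key m hnm]

end
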